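/- If π is a permutation of {0,...,n-1} and there exists a π-family (P_0,...,P_{n-1}) (with P_i a Schröder-type path from (i,0) to (0,π(i))) whose supports are pairwise disjoint, then π is the identity permutation. -/

import Mathlib

/-- A Schröder-type path from `src` to `tgt`. -/
def IsSchroderPath (p : List (ℤ × ℤ)) (src tgt : ℤ × ℤ) : Prop :=
  p.head? = some src ∧ p.getLast? = some tgt ∧
    p.Chain' fun u v => v - u = (0, 1) ∨ v - u = (-1, 1) ∨ v - u = (-1, 0)

def SStep (u v : ℤ × ℤ) : Prop :=
  v - u = (0, 1) ∨ v - u = (-1, 1) ∨ v - u = (-1, 0)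

lemma sstep_cases {u v : ℤ × ℤ} (h : SStep u v) :
    (v.1 = u.1 ∧ v.2 = u.2 + 1) ∨ (v.1 = u.1 - 1 ∧ v.2 = u.2 + 1) ∨
      (v.1 = u.1 - 1 ∧ v.2 = u.2) := by
  rcases h with h | h | h <;>
    rw [Prod.ext_iff] at h <;>
    simp only [Prod.fst_sub, Prod.snd_sub] at h <;>
    omega

lemma lvl_lt_head : ∀ (rest : List (ℤ × ℤ)) (s : ℤ × ℤ),
    List.Chain' SStep (s :: rest) → ∀ q ∈ rest, q.1 - q.2 < s.1 - s.2 := by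
  intro rest
  induction rest with
  | nil => intro s _ q hq; simp at hq
  | cons v rest ih =>
    intro s hc q hq
    rw [List.Chain', List.isChain_cons_cons] at hc
    have hsv := sstep_cases hc.1
    rcases List.mem_cons.mp hq with rfl | hq
    · omega
    · have := ih v hc.2 q hq
      omega

lemma x_ge_getLast : ∀ (p : List (ℤ × ℤ)) (t : ℤ × ℤ),
    List.Chain' SStep p → p.getLast? = some t → ∀ q ∈ p, t.1 ≤ q.1 := by
  intro p
  induction p with
  | nil => intro t _ h; simp at h
  | cons u rest ih =>
    intro t hc hl q hq
    cases rest with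
    | nil =>
      simp at hl hq
      subst hl; subst hq
      exact le_refl _
    | cons v rest' =>
      rw [List.getLast?_cons_cons] at hl
      rw [List.Chain', List.isChain_cons_cons] at hc
      have hsv := sstep_cases hc.1
      have hv := ih t hc.2 hl v (by simp)
      rcases List.mem_cons.mp hq with rfl | hq
      · omega
      · exact ih t hc.2 hl q hq

lemma succ_mem : ∀ (p : List (ℤ × ℤ)) (t : ℤ × ℤ),
    List.Chain' SStep p → p.getLast? = some t → ∀ q ∈ p, q ≠ t →
      ∃ r ∈ p, SStep q r := by
  intro p
  induction p with
  | nil => intro t _ h; simp at h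
  | cons u rest ih =>
    intro t hc hl q hq hqt
    cases rest with
    | nil =>
      simp at hl hq
      subst hl; subst hq
      exact absurd rfl hqt
    | cons v rest' =>
      rw [List.getLast?_cons_cons] at hl
      rw [List.Chain', List.isChain_cons_cons] at hc
      rcases List.mem_cons.mp hq with rfl | hq
      · exact ⟨v, by simp, hc.1⟩
      · obtain ⟨r, hr, hrr⟩ := ih t hc.2 hl q hq hqt
        exact ⟨r, by simp [hr], hrr⟩

lemma pred_mem : ∀ (p : List (ℤ × ℤ)) (s : ℤ × ℤ),
    List.Chain' SStep p → p.head? = some s → ∀ q ∈ p, q ≠ s →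
      ∃ r ∈ p, SStep r q := by
  intro p
  induction p with
  | nil => intro s _ h; simp at h
  | cons u rest ih =>
    intro s hc hl q hq hqs
    simp at hl
    subst hl
    rcases List.mem_cons.mp hq with rfl | hq
    · exact absurd rfl hqs
    · cases rest with
      | nil => simp at hq
      | cons v rest' =>
        rw [List.Chain', List.isChain_cons_cons] at hc
        rcases eq_or_ne q v with rfl | hqv
        · exact ⟨u, by simp, hc.1⟩
        · obtain ⟨r, hr, hrr⟩ := ih v hc.2 (by simp) q hq hqv
          exact ⟨r, by simp [hr], hrr⟩

lemma level_hit : ∀ (p : List (ℤ × ℤ)) (s t : ℤ × ℤ),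
    List.Chain' SStep p → p.head? = some s → p.getLast? = some t →
      ∀ d : ℤ, t.1 - t.2 ≤ d → d ≤ s.1 - s.2 →
        ∃ q ∈ p, q.1 - q.2 = d ∨ q.1 - q.2 = d + 1 := by
  intro p
  induction p with
  | nil => intro s t _ h; simp at h
  | cons u rest ih =>
    intro s t hc hh hl d hd1 hd2
    simp at hh
    subst hh
    cases rest with
    | nil =>
      simp at hl
      subst hl
      exact ⟨u, by simp, by omega⟩
    | cons v rest' =>
      rw [List.getLast?_cons_cons] at hl
      rw [List.Chain', List.isChain_cons_cons] at hc
      have hsv := sstep_cases hc.1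
      rcases eq_or_ne d (u.1 - u.2) with rfl | hne
      · exact ⟨u, by simp, by omega⟩
      · rcases eq_or_ne (d + 1) (u.1 - u.2) with he | hne2
        · -- d + 1 = lvl u; if lvl v = d then fine via IH anyway? lvl v ∈ {d, d-1}
          rcases hsv with ⟨h1, h2⟩ | ⟨h1, h2⟩ | ⟨h1, h2⟩
          · -- lvl v = lvl u - 1 = d
            obtain ⟨q, hq, hq2⟩ := ih v t hc.2 (by simp) hl d hd1 (by omega)
            exact ⟨q, by simp [hq], hq2⟩
          · -- lvl v = lvl u - 2 = d - 1 : u has lvl d+1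
            exact ⟨u, by simp, by omega⟩
          · obtain ⟨q, hq, hq2⟩ := ih v t hc.2 (by simp) hl d hd1 (by omega)
            exact ⟨q, by simp [hq], hq2⟩
        · -- d ≤ lvl u - 2 ≤ lvl v
          have : d ≤ v.1 - v.2 := by omega
          obtain ⟨q, hq, hq2⟩ := ih v t hc.2 (by simp) hl d hd1 this
          exact ⟨q, by simp [hq], hq2⟩

lemma y_ge_head : ∀ (rest : List (ℤ × ℤ)) (s : ℤ × ℤ),
    List.Chain' SStep (s :: rest) → ∀ q ∈ s :: rest, s.2 ≤ q.2 := by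
  intro rest
  induction rest with
  | nil => intro s _ q hq; simp at hq; subst hq; exact le_refl _
  | cons v rest ih =>
    intro s hc q hq
    rw [List.Chain', List.isChain_cons_cons] at hc
    have hsv := sstep_cases hc.1
    rcases List.mem_cons.mp hq with rfl | hq
    · exact le_refl _
    · have := ih v hc.2 q hq
      omega

def lvSet (p : List (ℤ × ℤ)) (d : ℤ) : Finset ℤ :=
  ((p.filter fun q => q.1 - q.2 = d).map fun q => 2 * q.1).toFinset ∪
    ((p.filter fun q => q.1 - q.2 = d + 1).map fun q => 2 * q.1 - 1).toFinset

lemma mem_lvSet {p : List (ℤ × ℤ)} {d m : ℤ} :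
    m ∈ lvSet p d ↔ (∃ q ∈ p, q.1 - q.2 = d ∧ 2 * q.1 = m) ∨
      (∃ q ∈ p, q.1 - q.2 = d + 1 ∧ 2 * q.1 - 1 = m) := by
  simp only [lvSet, Finset.mem_union, List.mem_toFinset, List.mem_map, List.mem_filter,
    decide_eq_true_eq]
  constructor
  · rintro (⟨q, ⟨hq, h1⟩, h2⟩ | ⟨q, ⟨hq, h1⟩, h2⟩)
    · exact Or.inl ⟨q, hq, h1, h2⟩
    · exact Or.inr ⟨q, hq, h1, h2⟩
  · rintro (⟨q, hq, h1, h2⟩ | ⟨q, hq, h1, h2⟩)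
    · exact Or.inl ⟨q, ⟨hq, h1⟩, h2⟩
    · exact Or.inr ⟨q, ⟨hq, h1⟩, h2⟩

lemma shared_of_eq {p p' : List (ℤ × ℤ)} {d m : ℤ}
    (h1 : m ∈ lvSet p d) (h2 : m ∈ lvSet p' d) : ∃ q, q ∈ p ∧ q ∈ p' := by
  rw [mem_lvSet] at h1 h2
  rcases h1 with ⟨q, hq, hq1, hq2⟩ | ⟨q, hq, hq1, hq2⟩ <;>
    rcases h2 with ⟨r, hr, hr1, hr2⟩ | ⟨r, hr, hr1, hr2⟩
  · refine ⟨q, hq, ?_⟩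
    have : q = r := Prod.ext (by omega) (by omega)
    rw [this]; exact hr
  · omega
  · omega
  · refine ⟨q, hq, ?_⟩
    have : q = r := Prod.ext (by omega) (by omega)
    rw [this]; exact hr

section FLemmas

variable {p : List (ℤ × ℤ)} {a b : ℤ}

lemma lv_nonempty (hc : List.Chain' SStep p) (hh : p.head? = some (a, 0))
    (hl : p.getLast? = some (0, b)) {d : ℤ} (h1 : -b ≤ d) (h2 : d ≤ a) :
    (lvSet p d).Nonempty := by
  obtain ⟨q, hq, hq2⟩ := level_hit p (a, 0) (0, b) hc hh hl d (by simpa using h1)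
    (by simpa using h2)
  rcases hq2 with h | h
  · exact ⟨2 * q.1, mem_lvSet.mpr (Or.inl ⟨q, hq, h, rfl⟩)⟩
  · exact ⟨2 * q.1 - 1, mem_lvSet.mpr (Or.inr ⟨q, hq, h, rfl⟩)⟩

lemma head_mem_p (hh : p.head? = some ((a : ℤ), (0 : ℤ))) : ((a : ℤ), (0 : ℤ)) ∈ p :=
  List.mem_of_mem_head? (Option.mem_def.mpr hh)

lemma last_mem_p (hl : p.getLast? = some ((0 : ℤ), (b : ℤ))) : ((0 : ℤ), (b : ℤ)) ∈ p :=
  List.mem_of_mem_getLast? (Option.mem_def.mpr hl)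

lemma lvl_le_a (hc : List.Chain' SStep p) (hh : p.head? = some (a, 0)) :
    ∀ q ∈ p, q.1 - q.2 ≤ a := by
  intro q hq
  cases p with
  | nil => simp at hh
  | cons u rest =>
    simp at hh
    subst hh
    rcases List.mem_cons.mp hq with rfl | hq
    · simp
    · have := lvl_lt_head rest (a, 0) hc q hq
      simp at this
      omega

lemma y_nonneg_p (hc : List.Chain' SStep p) (hh : p.head? = some (a, 0)) :
    ∀ q ∈ p, 0 ≤ q.2 := by
  intro q hq
  cases p with
  | nil => simp at hh
  | cons u rest =>
    simp at hh
    subst hh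
    have := y_ge_head rest (a, 0) hc q hq
    simpa using this

lemma x_nonneg_p (hc : List.Chain' SStep p) (hl : p.getLast? = some (0, b)) :
    ∀ q ∈ p, 0 ≤ q.1 := by
  intro q hq
  simpa using x_ge_getLast p (0, b) hc hl q hq

lemma F_top (hc : List.Chain' SStep p) (hh : p.head? = some (a, 0))
    (h : (lvSet p a).Nonempty) : (lvSet p a).min' h = 2 * a := by
  apply le_antisymm
  · exact Finset.min'_le _ _ (mem_lvSet.mpr (Or.inl ⟨(a, 0), head_mem_p hh, by simp, by simp⟩))
  · apply Finset.le_min'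
    intro m hm
    rcases mem_lvSet.mp hm with ⟨q, hq, h1, h2⟩ | ⟨q, hq, h1, h2⟩
    · have := y_nonneg_p hc hh q hq
      omega
    · have := lvl_le_a hc hh q hq
      omega

lemma F_bot_le (hl : p.getLast? = some (0, b)) (h : (lvSet p (-b)).Nonempty) :
    (lvSet p (-b)).min' h ≤ 0 := by
  exact Finset.min'_le _ _ (mem_lvSet.mpr (Or.inl ⟨(0, b), last_mem_p hl, by simp, by simp⟩))

lemma F_ge_neg_one (hc : List.Chain' SStep p) (hl : p.getLast? = some (0, b)) {d : ℤ}
    (h : (lvSet p d).Nonempty) : -1 ≤ (lvSet p d).min' h := by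
  apply Finset.le_min'
  intro m hm
  rcases mem_lvSet.mp hm with ⟨q, hq, h1, h2⟩ | ⟨q, hq, h1, h2⟩ <;>
    have := x_nonneg_p hc hl q hq <;> omega

lemma F_mono (hc : List.Chain' SStep p) (hl : p.getLast? = some (0, b)) {d : ℤ}
    (hd : -b ≤ d - 1) (h0 : (lvSet p (d - 1)).Nonempty) (h1 : (lvSet p d).Nonempty) :
    (lvSet p (d - 1)).min' h0 ≤ (lvSet p d).min' h1 := by
  have hm := Finset.min'_mem _ h1
  rcases mem_lvSet.mp hm with ⟨q, hq, hq1, hq2⟩ | ⟨q, hq, hq1, hq2⟩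
  · have : (2 * q.1 - 1) ∈ lvSet p (d - 1) := mem_lvSet.mpr (Or.inr ⟨q, hq, by omega, rfl⟩)
    have h2 := Finset.min'_le _ _ this
    omega
  · have hne : q ≠ (0, b) := by
      intro h
      rw [h] at hq1
      simp at hq1
      omega
    obtain ⟨r, hr, hs⟩ := succ_mem p (0, b) hc hl q hq hne
    rcases sstep_cases hs with ⟨e1, e2⟩ | ⟨e1, e2⟩ | ⟨e1, e2⟩
    · have : (2 * r.1 - 1) ∈ lvSet p (d - 1) := mem_lvSet.mpr (Or.inr ⟨r, hr, by omega, rfl⟩)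
      have h2 := Finset.min'_le _ _ this
      omega
    · have : (2 * r.1) ∈ lvSet p (d - 1) := mem_lvSet.mpr (Or.inl ⟨r, hr, by omega, rfl⟩)
      have h2 := Finset.min'_le _ _ this
      omega
    · have : (2 * r.1 - 1) ∈ lvSet p (d - 1) := mem_lvSet.mpr (Or.inr ⟨r, hr, by omega, rfl⟩)
      have h2 := Finset.min'_le _ _ this
      omega

lemma F_step (hc : List.Chain' SStep p) (hh : p.head? = some (a, 0)) {d : ℤ}
    (hd : d ≤ a) (h0 : (lvSet p (d - 1)).Nonempty) (h1 : (lvSet p d).Nonempty) :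
    (lvSet p d).min' h1 - 2 ≤ (lvSet p (d - 1)).min' h0 := by
  have hm := Finset.min'_mem _ h0
  rcases mem_lvSet.mp hm with ⟨q, hq, hq1, hq2⟩ | ⟨q, hq, hq1, hq2⟩
  · have hne : q ≠ (a, 0) := by
      intro h
      rw [h] at hq1
      simp at hq1
      omega
    obtain ⟨r, hr, hs⟩ := pred_mem p (a, 0) hc hh q hq hne
    rcases sstep_cases hs with ⟨e1, e2⟩ | ⟨e1, e2⟩ | ⟨e1, e2⟩
    · have : (2 * r.1) ∈ lvSet p d := mem_lvSet.mpr (Or.inl ⟨r, hr, by omega, rfl⟩)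
      have h2 := Finset.min'_le _ _ this
      omega
    · have : (2 * r.1 - 1) ∈ lvSet p d := mem_lvSet.mpr (Or.inr ⟨r, hr, by omega, rfl⟩)
      have h2 := Finset.min'_le _ _ this
      omega
    · have : (2 * r.1) ∈ lvSet p d := mem_lvSet.mpr (Or.inl ⟨r, hr, by omega, rfl⟩)
      have h2 := Finset.min'_le _ _ this
      omega
  · have : (2 * q.1) ∈ lvSet p d := mem_lvSet.mpr (Or.inl ⟨q, hq, by omega, rfl⟩)
    have h2 := Finset.min'_le _ _ this
    omega

lemma F_ge_2d (hc : List.Chain' SStep p) (hh : p.head? = some (a, 0))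
    (hl : p.getLast? = some (0, b)) :
    ∀ (k : ℕ) (d : ℤ), d = a - k → -b ≤ d → ∀ h : (lvSet p d).Nonempty,
      2 * d ≤ (lvSet p d).min' h := by
  intro k
  induction k with
  | zero =>
    intro d hd _ h
    simp at hd
    subst hd
    rw [F_top hc hh h]
  | succ k ih =>
    intro d hd hbd h
    have hd1 : d + 1 = a - k := by push_cast at hd ⊢; omega
    have hda : d + 1 ≤ a := by
      have : (0 : ℤ) ≤ k := Int.natCast_nonneg k
      omega
    have h1 : (lvSet p (d + 1)).Nonempty := lv_nonempty hc hh hl (by omega) hda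
    have step := F_step hc hh (d := d + 1) hda (by simpa using h) h1
    have := ih (d + 1) hd1 (by omega) h1
    simp only [add_sub_cancel_right] at step
    omega

end FLemmas

theorem disjoint_pi_family_identity (n : ℕ) (π : Equiv.Perm (Fin n))
    (P : Fin n → List (ℤ × ℤ))
    (hpath : ∀ i : Fin n, IsSchroderPath (P i) ((i : ℤ), 0) (0, ((π i : ℕ) : ℤ)))
    (hdisj : ∀ i j : Fin n, i ≠ j → ∀ x : ℤ × ℤ, x ∈ P i → x ∉ P j) :
    π = 1 := by
  have key : ∀ i j : Fin n, i < j → (π i : ℕ) < (π j : ℕ) := by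
    intro i j hij
    by_contra hcon
    push_neg at hcon
    have hne : (π j : ℕ) ≠ (π i : ℕ) := by
      intro h
      exact absurd (π.injective (Fin.val_injective h)) (Fin.ne_of_lt hij).symm
    have hlt : (π j : ℕ) < (π i : ℕ) := lt_of_le_of_ne hcon hne
    obtain ⟨hhi, hli, hci'⟩ := hpath i
    obtain ⟨hhj, hlj, hcj'⟩ := hpath j
    have hci : List.Chain' SStep (P i) := hci'
    have hcj : List.Chain' SStep (P j) := hcj'
    set ai : ℤ := (i : ℤ) with hai
    set aj : ℤ := (j : ℤ) with haj
    set bi : ℤ := ((π i : ℕ) : ℤ) with hbi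
    set bj : ℤ := ((π j : ℕ) : ℤ) with hbj
    have hij' : ai < aj := by simp [hai, haj]; exact_mod_cast hij
    have hba : bj < bi := by simp [hbi, hbj]; exact_mod_cast hlt
    have hai0 : 0 ≤ ai := Int.natCast_nonneg _
    have hbj0 : 0 ≤ bj := Int.natCast_nonneg _
    -- nonemptiness for all levels in range
    have hnei : ∀ d : ℤ, -bj ≤ d → d ≤ ai → (lvSet (P i) d).Nonempty := fun d h1 h2 =>
      lv_nonempty hci hhi hli (by omega) (by omega)
    have hnej : ∀ d : ℤ, -bj ≤ d → d ≤ ai → (lvSet (P j) d).Nonempty := fun d h1 h2 =>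
      lv_nonempty hcj hhj hlj (by omega) (by omega)
    have hdisj' : ∀ x : ℤ × ℤ, x ∈ P i → x ∈ P j → False := fun x h1 h2 =>
      hdisj i j (Fin.ne_of_lt hij) x h1 h2
    -- main claim by downward induction
    have claim : ∀ (k : ℕ) (d : ℤ), d = ai - k → -bj ≤ d →
        ∀ (hni : (lvSet (P i) d).Nonempty) (hnj : (lvSet (P j) d).Nonempty),
          (lvSet (P i) d).min' hni + 1 ≤ (lvSet (P j) d).min' hnj := by
      intro k
      induction k with
      | zero =>
        intro d hd hbd hni hnj
        simp at hd
        subst hd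
        have h1 : (lvSet (P i) ai).min' hni = 2 * ai := F_top hci hhi hni
        have h2 : 2 * ai ≤ (lvSet (P j) ai).min' hnj := by
          apply F_ge_2d hcj hhj hlj (j.val - i.val) ai _ (by omega)
          rw [hai, haj]
          push_cast [Nat.cast_sub (le_of_lt hij)]
          ring
        rcases eq_or_lt_of_le h2 with he | hl
        · exfalso
          have hmi := Finset.min'_mem _ hni
          have hmj := Finset.min'_mem _ hnj
          rw [h1] at hmi
          rw [← he] at hmj
          obtain ⟨q, hq1, hq2⟩ := shared_of_eq hmi hmj
          exact hdisj' q hq1 hq2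
        · omega
      | succ k ih =>
        intro d hd hbd hni hnj
        have hd1 : d + 1 = ai - k := by push_cast at hd ⊢; omega
        have hdai : d + 1 ≤ ai := by
          have : (0 : ℤ) ≤ k := Int.natCast_nonneg k
          omega
        have hni1 : (lvSet (P i) (d + 1)).Nonempty := hnei _ (by omega) (by omega)
        have hnj1 : (lvSet (P j) (d + 1)).Nonempty := hnej _ (by omega) (by omega)
        have IH := ih (d + 1) hd1 (by omega) hni1 hnj1
        have hmono : (lvSet (P i) d).min' hni ≤ (lvSet (P i) (d + 1)).min' hni1 := by
          have := F_mono hci hli (d := d + 1) (by omega) (by simpa using hni) hni1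
          simpa using this
        have hstep : (lvSet (P j) (d + 1)).min' hnj1 - 2 ≤ (lvSet (P j) d).min' hnj := by
          have := F_step hcj hhj (d := d + 1) (by omega) (by simpa using hnj) hnj1
          simpa using this
        set mi := (lvSet (P i) d).min' hni with hmi
        set mj := (lvSet (P j) d).min' hnj with hmj
        rcases lt_trichotomy mj (mi + 1) with hcase | hcase | hcase
        · rcases eq_or_lt_of_le (le_of_lt hcase) with _ | hcase2
          · omega
          · have hmjmi : mj < mi ∨ mj = mi := by omega
            rcases hmjmi with hlt2 | heq
            · -- mj = mi - 1 forced
              exfalso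
              have hmjv : mj = mi - 1 := by omega
              have hA : (lvSet (P i) (d+1)).min' hni1 = mi := by omega
              have hBj : (lvSet (P j) (d+1)).min' hnj1 = mi + 1 := by omega
              -- witness for mj
              have hwj := Finset.min'_mem _ hnj
              rw [← hmj] at hwj
              rcases mem_lvSet.mp hwj with ⟨r, hr, hr1, hr2⟩ | ⟨r, hr, hr1, hr2⟩
              · -- type A at level d: 2r.1 = mi - 1, so mi odd
                -- witness for mi (at level d): must be type B
                have hwi := Finset.min'_mem _ hni
                rw [← hmi] at hwi
                rcases mem_lvSet.mp hwi with ⟨q, hq, hq1, hq2⟩ | ⟨q, hq, hq1, hq2⟩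
                · omega
                · -- q ∈ P i, lvl q = d + 1, 2q.1 = mi + 1
                  -- witness for (lvSet (P j) (d+1)).min' = mi + 1
                  have hwj1 := Finset.min'_mem _ hnj1
                  rw [hBj] at hwj1
                  rcases mem_lvSet.mp hwj1 with ⟨s, hs, hs1, hs2⟩ | ⟨s, hs, hs1, hs2⟩
                  · -- s ∈ P j, lvl s = d + 1, 2s.1 = mi + 1 = 2q.1 ⇒ s = q
                    have : q = s := Prod.ext (by omega) (by omega)
                    exact hdisj' q hq (this ▸ hs)
                  · omega
              · -- type B at level (d-1)+... : lvl r = d, 2r.1 - 1 = mj = mi - 1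
                -- then 2r.1 ∈ lvSet (P j) (d+1)? no: r at lvl d contributes 2r.1 to lvSet (P j) d
                have hmem : (2 * r.1) ∈ lvSet (P j) (d + 1) :=
                  mem_lvSet.mpr (Or.inl ⟨r, hr, hr1, rfl⟩)
                have := Finset.min'_le _ _ hmem
                omega
            · -- mj = mi : shared point
              exfalso
              have hwi := Finset.min'_mem _ hni
              have hwj := Finset.min'_mem _ hnj
              rw [← hmi] at hwi
              rw [← hmj, heq] at hwj
              obtain ⟨q, hq1, hq2⟩ := shared_of_eq hwi hwj
              exact hdisj' q hq1 hq2
        · omega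
        · omega
    -- apply claim at d = -bj
    have hd0 : -bj = ai - (i.val + (π j).val : ℕ) := by
      rw [hai, hbj]
      push_cast
      ring
    have hni := hnei (-bj) (le_refl _) (by omega)
    have hnj := hnej (-bj) (le_refl _) (by omega)
    have hclaim := claim _ _ hd0 (le_refl _) hni hnj
    have hjle : (lvSet (P j) (-bj)).min' hnj ≤ 0 := F_bot_le hlj hnj
    have hige : -1 ≤ (lvSet (P i) (-bj)).min' hni := F_ge_neg_one hci hli hni
    have hieq : (lvSet (P i) (-bj)).min' hni = -1 := by omega
    have hwi := Finset.min'_mem _ hni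
    rw [hieq] at hwi
    rcases mem_lvSet.mp hwi with ⟨q, hq, hq1, hq2⟩ | ⟨q, hq, hq1, hq2⟩
    · omega
    · -- q ∈ P i, q.1 = 0, q.2 = bj - 1
      have hq1' : q.1 = 0 := by omega
      have hq2' : q.2 = bj - 1 := by omega
      have hne : q ≠ ((0 : ℤ), bi) := by
        intro h
        rw [h] at hq2'
        simp at hq2'
        omega
      obtain ⟨r, hr, hs⟩ := succ_mem (P i) (0, bi) hci hli q hq hne
      have hrx : 0 ≤ r.1 := x_nonneg_p hci hli r hr
      rcases sstep_cases hs with ⟨e1, e2⟩ | ⟨e1, e2⟩ | ⟨e1, e2⟩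
      · have : r = ((0 : ℤ), bj) := Prod.ext (by omega) (by omega)
        rw [this] at hr
        exact hdisj' _ hr (last_mem_p hlj)
      · omega
      · omega
  -- π is strictly monotone hence the identity
  have hsm : StrictMono π := fun i j hij => Fin.lt_def.mpr (key i j hij)
  have : ⇑π = id := by
    apply (StrictMono.range_inj hsm strictMono_id).mp
    rw [Set.range_id, Set.range_eq_univ]
    exact π.surjective
  ext x
  simp [congrFun this x]
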